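/- Let E = (Fin d → ℂ) and let X and X' be complex manifolds modeled on E (Hausdorff). Let the group G = (Fin n → ℂˣ) act on X and on X' by biholomorphisms (MulActions such that every g acts holomorphically on X and on X'). Suppose there exist points q ∈ X and q' ∈ X' whose G-orbits are open and dense in X and in X' respectively. Suppose there is a nonempty index type ι and families of G-invariant open sets V : ι → Set X and V' : ι → Set X' with ⋃ p, V p = X and ⋃ p, V' p = X', and suppose that for every p ∈ ι there is an equivariant biholomorphism from V p onto V' p, i.e., a map φ_p : V p → X' that is injective, holomorphic on V p, has image exactly V' p, has holomorphic inverse, and satisfies φ_p(g • x) = g • φ_p(x) for all g ∈ G and x ∈ V p. Then there exists an equivariant biholomorphism from X onto X': a bijection Φ : X → X' that is holomorphic, has holomorphic inverse, and satisfies Φ(g • x) = g • Φ(x) for all g ∈ G and x ∈ X. -/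

import Mathlib

open scoped Manifold
open Set Filter Topology MulAction

/-- Two functions continuous on an open set `U` that agree on `U ∩ D` with `D` dense
agree on all of `U` (codomain Hausdorff). -/
private lemma glue_aux {Y Z : Type*} [TopologicalSpace Y] [TopologicalSpace Z] [T2Space Z]
    {f g : Y → Z} {U D : Set Y} (hU : IsOpen U) (hD : Dense D)
    (hf : ContinuousOn f U) (hg : ContinuousOn g U)
    (heq : ∀ z ∈ U ∩ D, f z = g z) {x : Y} (hx : x ∈ U) : f x = g x := by
  have hxc : x ∈ closure (U ∩ D) := hD.open_subset_closure_inter hU hx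
  have hnb : (𝓝[U ∩ D] x).NeBot := mem_closure_iff_nhdsWithin_neBot.1 hxc
  have h1 : Filter.Tendsto f (𝓝[U ∩ D] x) (𝓝 (f x)) :=
    (hf.continuousWithinAt hx).mono inter_subset_left
  have h2 : Filter.Tendsto g (𝓝[U ∩ D] x) (𝓝 (g x)) :=
    (hg.continuousWithinAt hx).mono inter_subset_left
  have heq' : g =ᶠ[𝓝[U ∩ D] x] f :=
    eventually_mem_nhdsWithin.mono fun z hz => (heq z hz).symm
  exact tendsto_nhds_unique h1 (h2.congr' heq')

/-- Gluing equivariant biholomorphisms: if `X` and `X'` are complex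
manifolds with holomorphic `G = (ℂˣ)ⁿ`-actions having open dense orbits, covered by
`G`-invariant open families `V`, `V'` indexed by a nonempty type, with an equivariant
biholomorphism `V p → V' p` for each index `p`, then `X` and `X'` are equivariantly
biholomorphic. -/
theorem stmt8 (n d : ℕ) {X X' : Type} [TopologicalSpace X] [T2Space X]
    [ChartedSpace (Fin d → ℂ) X] [IsManifold 𝓘(ℂ, Fin d → ℂ) (⊤ : ℕ∞) X]
    [TopologicalSpace X'] [T2Space X']
    [ChartedSpace (Fin d → ℂ) X'] [IsManifold 𝓘(ℂ, Fin d → ℂ) (⊤ : ℕ∞) X']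
    [MulAction (Fin n → ℂˣ) X] [MulAction (Fin n → ℂˣ) X']
    (holX : ∀ g : Fin n → ℂˣ,
      MDifferentiable 𝓘(ℂ, Fin d → ℂ) 𝓘(ℂ, Fin d → ℂ) (fun x : X => g • x))
    (holX' : ∀ g : Fin n → ℂˣ,
      MDifferentiable 𝓘(ℂ, Fin d → ℂ) 𝓘(ℂ, Fin d → ℂ) (fun x : X' => g • x))
    (q : X) (q' : X')
    (hq : IsOpen (MulAction.orbit (Fin n → ℂˣ) q) ∧ Dense (MulAction.orbit (Fin n → ℂˣ) q))
    (hq' : IsOpen (MulAction.orbit (Fin n → ℂˣ) q') ∧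
      Dense (MulAction.orbit (Fin n → ℂˣ) q'))
    (ι : Type) [Nonempty ι] (V : ι → Set X) (V' : ι → Set X')
    (hVopen : ∀ p, IsOpen (V p)) (hV'open : ∀ p, IsOpen (V' p))
    (hVinv : ∀ p, ∀ g : Fin n → ℂˣ, ∀ x ∈ V p, g • x ∈ V p)
    (hV'inv : ∀ p, ∀ g : Fin n → ℂˣ, ∀ x ∈ V' p, g • x ∈ V' p)
    (hVcover : (⋃ p, V p) = Set.univ) (hV'cover : (⋃ p, V' p) = Set.univ)
    (φ : ι → X → X')
    (hφ : ∀ p : ι,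
      MDifferentiableOn 𝓘(ℂ, Fin d → ℂ) 𝓘(ℂ, Fin d → ℂ) (φ p) (V p) ∧
      Set.InjOn (φ p) (V p) ∧
      φ p '' V p = V' p ∧
      (∃ ψ : X' → X,
        MDifferentiableOn 𝓘(ℂ, Fin d → ℂ) 𝓘(ℂ, Fin d → ℂ) ψ (V' p) ∧
        (∀ y ∈ V' p, ψ y ∈ V p) ∧
        (∀ x ∈ V p, ψ (φ p x) = x) ∧ (∀ y ∈ V' p, φ p (ψ y) = y)) ∧
      (∀ g : Fin n → ℂˣ, ∀ x ∈ V p, φ p (g • x) = g • φ p x)) :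
    ∃ Φ : X → X',
      Function.Bijective Φ ∧
      MDifferentiable 𝓘(ℂ, Fin d → ℂ) 𝓘(ℂ, Fin d → ℂ) Φ ∧
      (∃ Ψ : X' → X,
        MDifferentiable 𝓘(ℂ, Fin d → ℂ) 𝓘(ℂ, Fin d → ℂ) Ψ ∧
        Function.LeftInverse Ψ Φ ∧ Function.RightInverse Ψ Φ) ∧
      (∀ g : Fin n → ℂˣ, ∀ x : X, Φ (g • x) = g • Φ x) := by
  classical
  obtain ⟨hqo, hqd⟩ := hq
  obtain ⟨hq'o, hq'd⟩ := hq'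
  have hφd : ∀ p, MDifferentiableOn 𝓘(ℂ, Fin d → ℂ) 𝓘(ℂ, Fin d → ℂ) (φ p) (V p) :=
    fun p => (hφ p).1
  have hφi : ∀ p, Set.InjOn (φ p) (V p) := fun p => (hφ p).2.1
  have hφim : ∀ p, φ p '' V p = V' p := fun p => (hφ p).2.2.1
  have hφe : ∀ p, ∀ g : Fin n → ℂˣ, ∀ x ∈ V p, φ p (g • x) = g • φ p x :=
    fun p => (hφ p).2.2.2.2
  choose ψ hψd hψmem hψl hψr using fun p => (hφ p).2.2.2.1
  -- commutativity of the action of the abelian group with itself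
  have scX' : ∀ (g h : Fin n → ℂˣ) (y : X'), g • h • y = h • g • y := by
    intro g h y; rw [← mul_smul, mul_comm, mul_smul]
  -- `q` belongs to every nonempty `V p`
  have hqV : ∀ p, ∀ x ∈ V p, q ∈ V p := by
    intro p x hx
    obtain ⟨y, hyV, hyO⟩ := hqd.inter_open_nonempty _ (hVopen p) ⟨x, hx⟩
    obtain ⟨g, rfl⟩ := hyO
    have := hVinv p g⁻¹ _ hyV
    rwa [inv_smul_smul] at this
  -- `q'` belongs to every nonempty `V' p`
  have hq'V' : ∀ p, ∀ y ∈ V' p, q' ∈ V' p := by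
    intro p y hy
    obtain ⟨z, hzV, hzO⟩ := hq'd.inter_open_nonempty _ (hV'open p) ⟨y, hy⟩
    obtain ⟨g, rfl⟩ := hzO
    have := hV'inv p g⁻¹ _ hzV
    rwa [inv_smul_smul] at this
  -- `φ p q` lies in the orbit of `q'`
  have key : ∀ p, (∃ x, x ∈ V p) → ∃ g : Fin n → ℂˣ, φ p q = g • q' := by
    rintro p ⟨x, hx⟩
    have hqp : q ∈ V p := hqV p x hx
    have hφqV' : φ p q ∈ V' p := (hφim p) ▸ Set.mem_image_of_mem _ hqp
    have hO : IsOpen (V' p ∩ ψ p ⁻¹' (MulAction.orbit (Fin n → ℂˣ) q)) :=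
      (hψd p).continuousOn.isOpen_inter_preimage (hV'open p) hqo
    have hmem : φ p q ∈ V' p ∩ ψ p ⁻¹' (MulAction.orbit (Fin n → ℂˣ) q) := by
      refine ⟨hφqV', ?_⟩
      rw [Set.mem_preimage, hψl p q hqp]
      exact MulAction.mem_orbit_self q
    obtain ⟨y, ⟨hyV', hyψ⟩, hyO'⟩ := hq'd.inter_open_nonempty _ hO ⟨_, hmem⟩
    obtain ⟨g, rfl⟩ := hyO'
    obtain ⟨a, ha⟩ := hyψ
    have h1 : φ p (a • q) = a • φ p q := hφe p a q hqp
    have h2 : φ p (ψ p (g • q')) = g • q' := hψr p _ hyV'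
    rw [← ha, h1] at h2
    refine ⟨a⁻¹ * g, ?_⟩
    rw [mul_smul, ← h2, inv_smul_smul]
  have key' : ∀ p, ∃ g : Fin n → ℂˣ, (∃ x, x ∈ V p) → φ p q = g • q' := by
    intro p
    by_cases hne : ∃ x, x ∈ V p
    · exact ⟨(key p hne).choose, fun _ => (key p hne).choose_spec⟩
    · exact ⟨1, fun h => absurd h hne⟩
  choose h hh using key'
  -- normalized maps
  set φ' : ι → X → X' := fun p x => (h p)⁻¹ • φ p x with hφ'def
  set ψ' : ι → X' → X := fun p y => ψ p (h p • y) with hψ'def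
  have hφ'mem : ∀ p, ∀ x ∈ V p, φ' p x ∈ V' p :=
    fun p x hx => hV'inv p (h p)⁻¹ _ ((hφim p) ▸ Set.mem_image_of_mem _ hx)
  have hφ'e : ∀ p, ∀ g : Fin n → ℂˣ, ∀ x ∈ V p, φ' p (g • x) = g • φ' p x := by
    intro p g x hx
    simp only [hφ'def]
    rw [hφe p g x hx, scX']
  have hφ'q : ∀ p, ∀ x ∈ V p, φ' p q = q' := by
    intro p x hx
    simp only [hφ'def]
    rw [hh p ⟨x, hx⟩, inv_smul_smul]
  have hψ'mem : ∀ p, ∀ y ∈ V' p, ψ' p y ∈ V p :=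
    fun p y hy => hψmem p _ (hV'inv p (h p) y hy)
  have hψ'l : ∀ p, ∀ x ∈ V p, ψ' p (φ' p x) = x := by
    intro p x hx
    simp only [hφ'def, hψ'def]
    rw [smul_inv_smul, hψl p x hx]
  have hψ'r : ∀ p, ∀ y ∈ V' p, φ' p (ψ' p y) = y := by
    intro p y hy
    simp only [hφ'def, hψ'def]
    rw [hψr p _ (hV'inv p (h p) y hy), inv_smul_smul]
  have hψ'q' : ∀ p, ∀ y ∈ V' p, ψ' p q' = q := by
    intro p y hy
    have hx : ψ' p y ∈ V p := hψ'mem p y hy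
    have hq1 : q ∈ V p := hqV p _ hx
    have := hφ'q p _ hx
    rw [← this, hψ'l p q hq1]
  have hφ'inj : ∀ p, Set.InjOn (φ' p) (V p) := by
    intro p a ha b hb hab
    simp only [hφ'def] at hab
    exact hφi p ha hb (MulAction.injective _ hab)
  have hψ'e : ∀ p, ∀ g : Fin n → ℂˣ, ∀ y ∈ V' p, ψ' p (g • y) = g • ψ' p y := by
    intro p g y hy
    have hgy : g • y ∈ V' p := hV'inv p g y hy
    have h1 : φ' p (ψ' p (g • y)) = g • y := hψ'r p _ hgy
    have h2 : φ' p (g • ψ' p y) = g • y := by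
      rw [hφ'e p g _ (hψ'mem p y hy), hψ'r p y hy]
    exact hφ'inj p (hψ'mem p _ hgy) (hVinv p g _ (hψ'mem p y hy)) (h1.trans h2.symm)
  -- differentiability of the normalized maps
  have hφ'd : ∀ p, MDifferentiableOn 𝓘(ℂ, Fin d → ℂ) 𝓘(ℂ, Fin d → ℂ) (φ' p) (V p) := by
    intro p
    exact ((holX' (h p)⁻¹).mdifferentiableOn (s := Set.univ)).comp (hφd p)
      (Set.mapsTo_univ _ _)
  have hψ'd : ∀ p, MDifferentiableOn 𝓘(ℂ, Fin d → ℂ) 𝓘(ℂ, Fin d → ℂ) (ψ' p) (V' p) := by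
    intro p
    exact (hψd p).comp ((holX' (h p)).mdifferentiableOn) (fun y hy => hV'inv p (h p) y hy)
  -- gluing compatibility
  have hglue : ∀ p p' x, x ∈ V p → x ∈ V p' → φ' p x = φ' p' x := by
    intro p p' x hx hx'
    refine glue_aux ((hVopen p).inter (hVopen p')) hqd
      ((hφ'd p).continuousOn.mono Set.inter_subset_left)
      ((hφ'd p').continuousOn.mono Set.inter_subset_right) ?_ ⟨hx, hx'⟩
    rintro z ⟨⟨hz1, hz2⟩, g, rfl⟩
    rw [hφ'e p g q (hqV p x hx), hφ'e p' g q (hqV p' x hx'),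
      hφ'q p x hx, hφ'q p' x hx']
  have hglue' : ∀ p p' y, y ∈ V' p → y ∈ V' p' → ψ' p y = ψ' p' y := by
    intro p p' y hy hy'
    refine glue_aux ((hV'open p).inter (hV'open p')) hq'd
      ((hψ'd p).continuousOn.mono Set.inter_subset_left)
      ((hψ'd p').continuousOn.mono Set.inter_subset_right) ?_ ⟨hy, hy'⟩
    rintro z ⟨⟨hz1, hz2⟩, g, rfl⟩
    rw [hψ'e p g q' (hq'V' p y hy), hψ'e p' g q' (hq'V' p' y hy'),
      hψ'q' p y hy, hψ'q' p' y hy']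
  -- choose covering indices
  have hcov : ∀ x : X, ∃ p, x ∈ V p := by
    intro x
    have : x ∈ ⋃ p, V p := hVcover ▸ Set.mem_univ x
    exact Set.mem_iUnion.1 this
  have hcov' : ∀ y : X', ∃ p, y ∈ V' p := by
    intro y
    have : y ∈ ⋃ p, V' p := hV'cover ▸ Set.mem_univ y
    exact Set.mem_iUnion.1 this
  choose P hP using hcov
  choose P' hP' using hcov'
  set Φ : X → X' := fun x => φ' (P x) x with hΦdef
  set Ψ : X' → X := fun y => ψ' (P' y) y with hΨdef
  have hΦmem : ∀ x, Φ x ∈ V' (P x) := fun x => hφ'mem _ _ (hP x)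
  have hΨmem : ∀ y, Ψ y ∈ V (P' y) := fun y => hψ'mem _ _ (hP' y)
  have hli : Function.LeftInverse Ψ Φ := by
    intro x
    have h0 : Ψ (Φ x) = ψ' (P' (Φ x)) (Φ x) := rfl
    rw [h0, hglue' (P' (Φ x)) (P x) _ (hP' _) (hΦmem x)]
    have h1 : Φ x = φ' (P x) x := rfl
    rw [h1, hψ'l _ _ (hP x)]
  have hri : Function.RightInverse Ψ Φ := by
    intro y
    have h0 : Φ (Ψ y) = φ' (P (Ψ y)) (Ψ y) := rfl
    rw [h0, hglue (P (Ψ y)) (P' y) _ (hP _) (hΨmem y)]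
    have h1 : Ψ y = ψ' (P' y) y := rfl
    rw [h1, hψ'r _ _ (hP' y)]
  have hΦd : MDifferentiable 𝓘(ℂ, Fin d → ℂ) 𝓘(ℂ, Fin d → ℂ) Φ := by
    intro x
    have hmem : V (P x) ∈ 𝓝 x := (hVopen _).mem_nhds (hP x)
    refine ((hφ'd (P x)).mdifferentiableAt hmem).congr_of_eventuallyEq ?_
    filter_upwards [hmem] with z hz
    exact hglue (P z) (P x) z (hP z) hz
  have hΨd : MDifferentiable 𝓘(ℂ, Fin d → ℂ) 𝓘(ℂ, Fin d → ℂ) Ψ := by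
    intro y
    have hmem : V' (P' y) ∈ 𝓝 y := (hV'open _).mem_nhds (hP' y)
    refine ((hψ'd (P' y)).mdifferentiableAt hmem).congr_of_eventuallyEq ?_
    filter_upwards [hmem] with z hz
    exact hglue' (P' z) (P' y) z (hP' z) hz
  have hΦe : ∀ g : Fin n → ℂˣ, ∀ x : X, Φ (g • x) = g • Φ x := by
    intro g x
    have h0 : Φ (g • x) = φ' (P (g • x)) (g • x) := rfl
    rw [h0, hglue (P (g • x)) (P x) _ (hP _) (hVinv (P x) g x (hP x)),
      hφ'e (P x) g x (hP x)]
  exact ⟨Φ, ⟨hli.injective, hri.surjective⟩, hΦd, ⟨Ψ, hΨd, hli, hri⟩, hΦe⟩
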